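/- arXiv:2408.13747 — 7 statements merged into one kernel-verified Lean document; each statement's English description precedes it below -/
import Mathlib

section
/- Let f : [0,∞) → ℝ be C³ with f''' + (1/2)·f·f'' = 0 on [0,∞), f'' ≥ 0, and suppose there is a constant C₁ > 0 with f(η) ≥ C₁·η for all η ≥ 1. Then for all η ≥ 1, 0 ≤ f''(η) ≤ f''(1)·exp(−C₁·(η² − 1)/4). -/
theorem blasius_gaussian_decay (f : ℝ → ℝ) (C₁ : ℝ)
    (hf : ContDiffOn ℝ 3 f (Set.Ici 0))
    (hode : ∀ η ≥ (0:ℝ), iteratedDeriv 3 f η + (1/2) * f η * iteratedDeriv 2 f η = 0)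
    (hnn : ∀ η ≥ (0:ℝ), 0 ≤ iteratedDeriv 2 f η)
    (hC : 0 < C₁) (hgrow : ∀ η ≥ (1:ℝ), C₁ * η ≤ f η) :
    ∀ η ≥ (1:ℝ), 0 ≤ iteratedDeriv 2 f η ∧
      iteratedDeriv 2 f η ≤ iteratedDeriv 2 f 1 * Real.exp (-C₁ * (η^2 - 1) / 4) := by
  set g := iteratedDeriv 2 f with hg
  have hg2 : g = deriv (deriv f) := by
    rw [hg, show (2:ℕ) = 1 + 1 from rfl, iteratedDeriv_succ, iteratedDeriv_one]
  have hderivg : deriv g = iteratedDeriv 3 f := by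
    rw [show (3:ℕ) = 2 + 1 from rfl, iteratedDeriv_succ]
  -- smoothness on the open set Ioi 0
  have h1 : ContDiffOn ℝ 3 f (Set.Ioi 0) := hf.mono Set.Ioi_subset_Ici_self
  have h2 : ContDiffOn ℝ 2 (deriv f) (Set.Ioi 0) :=
    h1.deriv_of_isOpen isOpen_Ioi (by norm_num)
  have h3 : ContDiffOn ℝ 1 (deriv (deriv f)) (Set.Ioi 0) :=
    h2.deriv_of_isOpen isOpen_Ioi (by norm_num)
  have hgdiff : ∀ η : ℝ, 0 < η → DifferentiableAt ℝ g η := by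
    intro η hη
    rw [hg2]
    exact (h3.differentiableOn (by norm_num)).differentiableAt (isOpen_Ioi.mem_nhds hη)
  have hgderiv : ∀ η : ℝ, 0 < η →
      HasDerivAt g (-(1/2) * f η * g η) η := by
    intro η hη
    have h := (hgdiff η hη).hasDerivAt
    have : deriv g η = -(1/2) * f η * g η := by
      rw [hderivg]
      have := hode η hη.le
      linarith
    rwa [this] at h
  -- the auxiliary function
  set φ : ℝ → ℝ := fun η => g η * Real.exp (C₁ * (η ^ 2 - 1) / 4) with hφ
  have hφderiv : ∀ η : ℝ, 0 < η →
      HasDerivAt φ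
        ((-(1/2) * f η * g η) * Real.exp (C₁ * (η ^ 2 - 1) / 4)
          + g η * (C₁ * η / 2 * Real.exp (C₁ * (η ^ 2 - 1) / 4))) η := by
    intro η hη
    have hu : HasDerivAt (fun η : ℝ => C₁ * (η ^ 2 - 1) / 4) (C₁ * η / 2) η := by
      have : HasDerivAt (fun η : ℝ => C₁ * (η ^ 2 - 1) / 4) (C₁ * (2 * η ^ 1) / 4) η := by
        have h := ((hasDerivAt_pow 2 η).sub_const 1).const_mul C₁
        exact h.div_const 4
      convert this using 1; ring
    have hexp := hu.exp
    have h := (hgderiv η hη).mul hexp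
    exact h.congr_deriv (by ring)
  have hφanti : AntitoneOn φ (Set.Ici 1) := by
    apply antitoneOn_of_deriv_nonpos (convex_Ici 1)
    · apply ContinuousOn.mul
      · intro x hx
        exact ((hgdiff x (by simp at hx; linarith)).continuousAt).continuousWithinAt
      · exact (Real.continuous_exp.comp (by continuity)).continuousOn
    · intro x hx
      rw [interior_Ici] at hx
      have hx0 : (0:ℝ) < x := by simp at hx; linarith
      exact ((hφderiv x hx0).differentiableAt).differentiableWithinAt
    · intro x hx
      rw [interior_Ici] at hx
      have hx1 : (1:ℝ) < x := hx
      have hx0 : (0:ℝ) < x := by linarith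
      rw [(hφderiv x hx0).deriv]
      have hgx : 0 ≤ g x := hnn x hx0.le
      have hfx : C₁ * x ≤ f x := hgrow x hx1.le
      have hexp : 0 < Real.exp (C₁ * (x ^ 2 - 1) / 4) := Real.exp_pos _
      have key : (-(1/2) * f x * g x) + g x * (C₁ * x / 2) ≤ 0 := by nlinarith
      nlinarith
  intro η hη
  refine ⟨hnn η (by linarith), ?_⟩
  have h1 : φ η ≤ φ 1 := hφanti (by simp) (by simp [hη]) hη
  have hexp : 0 < Real.exp (C₁ * (η ^ 2 - 1) / 4) := Real.exp_pos _
  have hφ1 : φ 1 = g 1 := by simp [hφ]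
  have hrel : Real.exp (-C₁ * (η ^ 2 - 1) / 4)
      = (Real.exp (C₁ * (η ^ 2 - 1) / 4))⁻¹ := by
    rw [← Real.exp_neg]; ring_nf
  rw [hφ1] at h1
  have h2 : g η * Real.exp (C₁ * (η ^ 2 - 1) / 4) ≤ g 1 := by simpa [hφ] using h1
  have h3 : g η ≤ g 1 / Real.exp (C₁ * (η ^ 2 - 1) / 4) := (le_div_iff₀ hexp).mpr h2
  calc g η ≤ g 1 / Real.exp (C₁ * (η ^ 2 - 1) / 4) := h3
    _ = g 1 * Real.exp (-C₁ * (η ^ 2 - 1) / 4) := by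
        rw [hrel]; ring
end

section
/- Let g : [0,∞) → ℝ be C¹ with g' nonincreasing and g'(1) > 0. Then for every x ≥ 0, g(1) − g(√((x+1)/(x+2))) ≥ g'(1)/(4·(x+1)). -/
theorem optimality_lower_bound (g : ℝ → ℝ)
    (hg : ContDiffOn ℝ 1 g (Set.Ici 0))
    (hmono : ∀ s ∈ Set.Ici (0:ℝ), ∀ t ∈ Set.Ici (0:ℝ), s ≤ t → deriv g t ≤ deriv g s)
    (h1 : 0 < deriv g 1) :
    ∀ x ≥ (0:ℝ),
      g 1 - g (Real.sqrt ((x + 1) / (x + 2))) ≥ deriv g 1 / (4 * (x + 1)) := by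
  intro x hx
  set c := deriv g 1 with hc
  set s := Real.sqrt ((x + 1) / (x + 2)) with hs
  have hx2 : (0:ℝ) < x + 2 := by linarith
  have hratio_nonneg : (0:ℝ) ≤ (x + 1) / (x + 2) := by positivity
  have hs0 : 0 ≤ s := Real.sqrt_nonneg _
  have hs2 : s * s = (x + 1) / (x + 2) := Real.mul_self_sqrt hratio_nonneg
  have hs2' : s * s * (x + 2) = x + 1 := by
    rw [hs2]; field_simp
  have hs1 : s ≤ 1 := by
    apply Real.sqrt_le_one.mpr
    rw [div_le_one hx2]; linarith
  -- Step A: g 1 - g s ≥ c * (1 - s)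
  have hgdiff : DifferentiableOn ℝ g (Set.Ici 0) := hg.differentiableOn one_ne_zero
  have hA : g 1 - g s ≥ c * (1 - s) := by
    have hmonoH : MonotoneOn (fun t => g t - c * t) (Set.Icc s 1) := by
      apply monotoneOn_of_deriv_nonneg (convex_Icc s 1)
      · apply ContinuousOn.sub
        · exact (hg.continuousOn).mono (fun t ht => le_trans hs0 ht.1)
        · exact (continuous_const.mul continuous_id).continuousOn
      · intro t ht
        rw [interior_Icc] at ht
        have ht0 : 0 < t := lt_of_le_of_lt hs0 ht.1
        have hgt : DifferentiableAt ℝ g t :=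
          (hgdiff t (le_of_lt ht0)).differentiableAt (Ici_mem_nhds ht0)
        exact (hgt.sub ((differentiableAt_const c).mul differentiableAt_id)).differentiableWithinAt
      · intro t ht
        rw [interior_Icc] at ht
        have ht0 : 0 < t := lt_of_le_of_lt hs0 ht.1
        have hgt : DifferentiableAt ℝ g t :=
          (hgdiff t (le_of_lt ht0)).differentiableAt (Ici_mem_nhds ht0)
        have hd : deriv (fun t => g t - c * t) t = deriv g t - c := by
          have h' : HasDerivAt (fun u => g u - c * u) (deriv g t - c * 1) t :=
            hgt.hasDerivAt.sub ((hasDerivAt_id t).const_mul c)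
          simpa using h'.deriv
        rw [hd, sub_nonneg, hc]
        exact hmono t (le_of_lt ht0) 1 (by norm_num) (le_of_lt ht.2)
    have := hmonoH (Set.left_mem_Icc.mpr hs1) (Set.right_mem_Icc.mpr hs1) hs1
    simp only [] at this
    nlinarith [this]
  -- Step B: 1 - s ≥ 1 / (4 * (x + 1))
  have hB : 1 - s ≥ 1 / (4 * (x + 1)) := by
    rw [ge_iff_le, div_le_iff₀ (by nlinarith)]
    nlinarith [hs2', hs1, hs0, hx]
  calc g 1 - g s ≥ c * (1 - s) := hA
    _ ≥ c * (1 / (4 * (x + 1))) := by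
        apply mul_le_mul_of_nonneg_left hB (le_of_lt h1)
    _ = c / (4 * (x + 1)) := by ring
end

section
/- Let W : (0,∞) → ℝ be three times continuously differentiable with W(Y) > 0 for all Y > 0, and suppose (Y/2)·W'(Y) + √(W(Y))·W''(Y) = 0 for all Y > 0. Define φ(Y) = Y·W'(Y) and the operator (Lφ)(Y) = −(Y/2)·φ'(Y) − (1/2)·(W''(Y)/√(W(Y)))·φ(Y) − √(W(Y))·φ''(Y). Then (Lφ)(Y) = φ(Y) for all Y > 0. -/
theorem linearized_operator_eigenfunction (W : ℝ → ℝ)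
    (hW : ContDiffOn ℝ 3 W (Set.Ioi 0))
    (hpos : ∀ Y > (0:ℝ), 0 < W Y)
    (heq : ∀ Y > (0:ℝ), (Y/2) * deriv W Y + Real.sqrt (W Y) * iteratedDeriv 2 W Y = 0)
    (φ : ℝ → ℝ) (hφ : ∀ Y, φ Y = Y * deriv W Y) :
    ∀ Y > (0:ℝ),
      -(Y/2) * deriv φ Y - (1/2) * (iteratedDeriv 2 W Y / Real.sqrt (W Y)) * φ Y
        - Real.sqrt (W Y) * iteratedDeriv 2 φ Y = φ Y := by
  have hO : IsOpen (Set.Ioi (0:ℝ)) := isOpen_Ioi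
  have hφf : φ = fun Y => Y * deriv W Y := funext hφ
  have hW1 : ContDiffOn ℝ 2 (deriv W) (Set.Ioi 0) :=
    hW.deriv_of_isOpen hO (by norm_num)
  have hW2 : ContDiffOn ℝ 1 (deriv (deriv W)) (Set.Ioi 0) :=
    hW1.deriv_of_isOpen hO (by norm_num)
  have hit2 : iteratedDeriv 2 W = deriv (deriv W) := by
    rw [iteratedDeriv_succ, iteratedDeriv_one]
  -- differentiability at each point
  have hdW : ∀ Y ∈ Set.Ioi (0:ℝ), HasDerivAt W (deriv W Y) Y := fun Y hY =>
    ((hW.differentiableOn (by norm_num)).differentiableAt (hO.mem_nhds hY)).hasDerivAt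
  have hdW1 : ∀ Y ∈ Set.Ioi (0:ℝ), HasDerivAt (deriv W) (deriv (deriv W) Y) Y := fun Y hY =>
    ((hW1.differentiableOn (by norm_num)).differentiableAt (hO.mem_nhds hY)).hasDerivAt
  have hdW2 : ∀ Y ∈ Set.Ioi (0:ℝ), HasDerivAt (deriv (deriv W)) (deriv (deriv (deriv W)) Y) Y :=
    fun Y hY =>
    ((hW2.differentiableOn (by norm_num)).differentiableAt (hO.mem_nhds hY)).hasDerivAt
  intro Y0 hY0
  have hY0' : Y0 ∈ Set.Ioi (0:ℝ) := hY0
  set W1 := deriv W Y0 with hW1def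
  set W2 := deriv (deriv W) Y0 with hW2def
  set W3 := deriv (deriv (deriv W)) Y0 with hW3def
  set s := Real.sqrt (W Y0) with hsdef
  have hWpos := hpos Y0 hY0
  have hs : 0 < s := Real.sqrt_pos.mpr hWpos
  have hs2 : s * s = W Y0 := Real.mul_self_sqrt hWpos.le
  -- derivative of the ODE
  have hsqrt : HasDerivAt (fun Y => Real.sqrt (W Y)) (deriv W Y0 / (2 * s)) Y0 :=
    (hdW Y0 hY0').sqrt hWpos.ne'
  have hg : HasDerivAt (fun Y => (Y/2) * deriv W Y + Real.sqrt (W Y) * deriv (deriv W) Y)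
      ((1/2) * W1 + (Y0/2) * W2 + ((W1 / (2*s)) * W2 + s * W3)) Y0 := by
    have h1 : HasDerivAt (fun Y : ℝ => (Y/2) * deriv W Y) ((1/2) * W1 + (Y0/2) * W2) Y0 := by
      have := ((hasDerivAt_id Y0).div_const 2).mul (hdW1 Y0 hY0')
      exact this.congr_deriv (by simp; rfl)
    have h2 : HasDerivAt (fun Y => Real.sqrt (W Y) * deriv (deriv W) Y)
        ((W1 / (2*s)) * W2 + s * W3) Y0 := hsqrt.mul (hdW2 Y0 hY0')
    exact h1.add h2
  have hgzero : (fun Y => (Y/2) * deriv W Y + Real.sqrt (W Y) * deriv (deriv W) Y)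
      =ᶠ[nhds Y0] (fun _ => (0:ℝ)) := by
    filter_upwards [hO.mem_nhds hY0'] with Y hY
    have := heq Y hY
    rw [hit2] at this
    exact this
  have hBzero : (1/2) * W1 + (Y0/2) * W2 + ((W1 / (2*s)) * W2 + s * W3) = 0 := by
    have := (hg.congr_of_eventuallyEq hgzero.symm).unique (hasDerivAt_const Y0 0)
    linarith [this]
  have hA : (Y0/2) * W1 + s * W2 = 0 := by
    have := heq Y0 hY0
    rw [hit2] at this
    exact this
  -- derivative of φ
  have hφd : ∀ Y ∈ Set.Ioi (0:ℝ),
      HasDerivAt φ (deriv W Y + Y * deriv (deriv W) Y) Y := by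
    intro Y hY
    rw [hφf]
    have := (hasDerivAt_id Y).mul (hdW1 Y hY)
    exact this.congr_deriv (by simp)
  have hderivφ : Set.EqOn (deriv φ) (fun Y => deriv W Y + Y * deriv (deriv W) Y)
      (Set.Ioi 0) := fun Y hY => (hφd Y hY).deriv
  have hderivφ0 : deriv φ Y0 = W1 + Y0 * W2 := hderivφ hY0'
  have hφ2 : iteratedDeriv 2 φ Y0 = W2 + (W2 + Y0 * W3) := by
    rw [iteratedDeriv_succ, iteratedDeriv_one]
    have hev : deriv φ =ᶠ[nhds Y0] (fun Y => deriv W Y + Y * deriv (deriv W) Y) := by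
      filter_upwards [hO.mem_nhds hY0'] with Y hY using hderivφ hY
    rw [Filter.EventuallyEq.deriv_eq hev]
    have h2 : HasDerivAt (fun Y => deriv W Y + Y * deriv (deriv W) Y)
        (W2 + (W2 + Y0 * W3)) Y0 := by
      have := (hdW1 Y0 hY0').add ((hasDerivAt_id Y0).mul (hdW2 Y0 hY0'))
      exact this.congr_deriv (by simp; rfl)
    exact h2.deriv
  rw [hφ Y0, hderivφ0, hφ2, hit2]
  have hB2 : s * W1 + s * Y0 * W2 + W1 * W2 + 2 * (s * s) * W3 = 0 := by
    have h := hBzero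
    field_simp at h
    linarith
  rw [show deriv W Y0 = W1 from rfl]
  field_simp
  linear_combination (-Y0) * hB2 + (-4*s) * hA
end

section
/- Let α ∈ [0,1] and let φ : [0,∞) → ℝ be C¹ with φ(0) = 0, φ ∈ L²(0,∞), φ' ∈ L²(0,∞), and M := ∫₀^∞ ψ^α·|φ(ψ)| dψ < ∞. Then there is a constant C = C(α) such that ‖φ‖_{L²(0,∞)}^{3+2α} ≤ C·M²·‖φ'‖_{L²(0,∞)}^{1+2α}. -/
open MeasureTheory Real Set

lemma my_cs {μ : Measure ℝ} {f g : ℝ → ℝ}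
    (hf : AEStronglyMeasurable f μ) (hg : AEStronglyMeasurable g μ)
    (hf2 : Integrable (fun x => f x ^ 2) μ) (hg2 : Integrable (fun x => g x ^ 2) μ) :
    ∫ x, |f x| * |g x| ∂μ ≤
      Real.sqrt (∫ x, f x ^ 2 ∂μ) * Real.sqrt (∫ x, g x ^ 2 ∂μ) := by
  have h22 : (2:ℝ).HolderConjugate 2 := Real.holderConjugate_iff.mpr ⟨one_lt_two, by norm_num⟩
  have hfm : MemLp f (ENNReal.ofReal 2) μ := by
    rw [show ENNReal.ofReal 2 = 2 by norm_num]
    exact (memLp_two_iff_integrable_sq hf).2 hf2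
  have hgm : MemLp g (ENNReal.ofReal 2) μ := by
    rw [show ENNReal.ofReal 2 = 2 by norm_num]
    exact (memLp_two_iff_integrable_sq hg).2 hg2
  have := MeasureTheory.integral_mul_norm_le_Lp_mul_Lq h22 hfm hgm
  simp only [Real.norm_eq_abs] at this
  calc ∫ x, |f x| * |g x| ∂μ ≤ (∫ x, |f x| ^ (2:ℝ) ∂μ) ^ (1/(2:ℝ)) * (∫ x, |g x| ^ (2:ℝ) ∂μ) ^ (1/(2:ℝ)) := this
    _ = Real.sqrt (∫ x, f x ^ 2 ∂μ) * Real.sqrt (∫ x, g x ^ 2 ∂μ) := by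
        rw [show (fun x => |f x| ^ (2:ℝ)) = fun x => f x ^ 2 by funext x; rw [Real.rpow_two, sq_abs],
            show (fun x => |g x| ^ (2:ℝ)) = fun x => g x ^ 2 by funext x; rw [Real.rpow_two, sq_abs],
            Real.sqrt_eq_rpow, Real.sqrt_eq_rpow]


lemma nash_master (α : ℝ) (hα : α ∈ Set.Icc (0:ℝ) 1) (φ : ℝ → ℝ)
    (hφ : ContDiffOn ℝ 1 φ (Set.Ici 0)) (hφ0 : φ 0 = 0)
    (hN2 : MeasureTheory.IntegrableOn (fun ψ => φ ψ ^ 2) (Set.Ioi 0))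
    (hD2 : MeasureTheory.IntegrableOn (fun ψ => (deriv φ ψ) ^ 2) (Set.Ioi 0))
    (hM1 : MeasureTheory.IntegrableOn (fun ψ => ψ ^ α * |φ ψ|) (Set.Ioi 0)) :
    ∀ R > (0:ℝ), (∫ ψ in Set.Ioi (0:ℝ), φ ψ ^ 2) ≤
      (∫ ψ in Set.Ioi (0:ℝ), (deriv φ ψ) ^ 2) * R ^ 2 / 2 +
      Real.sqrt (2 * Real.sqrt (∫ ψ in Set.Ioi (0:ℝ), φ ψ ^ 2) *
          Real.sqrt (∫ ψ in Set.Ioi (0:ℝ), (deriv φ ψ) ^ 2)) *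
        (R ^ (-α) * (∫ ψ in Set.Ioi (0:ℝ), ψ ^ α * |φ ψ|)) := by
  obtain ⟨hα0, hα1⟩ := hα
  intro R hR
  set N := ∫ ψ in Set.Ioi (0:ℝ), φ ψ ^ 2 with hNdef
  set D := ∫ ψ in Set.Ioi (0:ℝ), (deriv φ ψ) ^ 2 with hDdef
  set M := ∫ ψ in Set.Ioi (0:ℝ), ψ ^ α * |φ ψ| with hMdef
  set K := Real.sqrt (2 * Real.sqrt N * Real.sqrt D) with hKdef
  have hφc : ContinuousOn φ (Set.Ici 0) := hφ.continuousOn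
  have hdm : AEStronglyMeasurable (deriv φ) (volume.restrict (Set.Ioi (0:ℝ))) :=
    (measurable_deriv φ).aestronglyMeasurable
  have hφm : ∀ s : Set ℝ, s ⊆ Set.Ici 0 → MeasurableSet s →
      AEStronglyMeasurable φ (volume.restrict s) := fun s hs hms =>
    (hφc.mono hs).aestronglyMeasurable hms
  have hderivAt : ∀ x ∈ Set.Ioi (0:ℝ), HasDerivAt φ (deriv φ x) x := fun x hx =>
    ((hφ.contDiffAt (Ici_mem_nhds hx)).differentiableAt one_ne_zero).hasDerivAt
  -- integrability of deriv φ on bounded intervals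
  have hdInt : ∀ x : ℝ, IntegrableOn (deriv φ) (Set.Ioc 0 x) := by
    intro x
    have hg : IntegrableOn (fun ψ => (deriv φ ψ)^2 + 1) (Set.Ioc 0 x) :=
      (hD2.mono_set Set.Ioc_subset_Ioi_self).add (integrableOn_const measure_Ioc_lt_top.ne)
    refine Integrable.mono' hg (hdm.mono_measure
      (Measure.restrict_mono Set.Ioc_subset_Ioi_self le_rfl)) ?_
    refine Filter.Eventually.of_forall fun ψ => ?_
    rw [Real.norm_eq_abs]
    nlinarith [sq_abs (deriv φ ψ), sq_nonneg (|deriv φ ψ| - 1)]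
  -- integrability of φ * deriv φ on Ioi 0
  have hpp : IntegrableOn (fun ψ => |φ ψ| * |deriv φ ψ|) (Set.Ioi 0) := by
    have hmeas : AEStronglyMeasurable (fun ψ => |φ ψ| * |deriv φ ψ|)
        (volume.restrict (Set.Ioi (0:ℝ))) := by
      simpa [Real.norm_eq_abs, Pi.mul_def] using
        ((hφm _ Set.Ioi_subset_Ici_self measurableSet_Ioi).norm.mul hdm.norm)
    refine Integrable.mono' (hN2.add hD2) hmeas ?_
    refine Filter.Eventually.of_forall fun ψ => ?_
    simp only [Pi.add_apply, Real.norm_eq_abs, abs_of_nonneg (mul_nonneg (abs_nonneg (φ ψ)) (abs_nonneg (deriv φ ψ)))]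
    nlinarith [sq_abs (φ ψ), sq_abs (deriv φ ψ), sq_nonneg (|φ ψ| - |deriv φ ψ|)]
  -- Lemma A: φ x ^ 2 ≤ x * D for x > 0
  have hA : ∀ x ∈ Set.Ioi (0:ℝ), φ x ^ 2 ≤ x * D := by
    intro x hx
    have hftc : ∫ y in (0:ℝ)..x, deriv φ y = φ x - φ 0 := by
      apply intervalIntegral.integral_eq_sub_of_hasDeriv_right_of_le (le_of_lt hx)
        (hφc.mono (by intro y hy; exact hy.1))
      · intro y hy
        exact (hderivAt y hy.1).hasDerivWithinAt
      · exact (intervalIntegrable_iff_integrableOn_Ioc_of_le (le_of_lt hx)).2 (hdInt x)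
    have hIx : IntegrableOn (fun ψ => (deriv φ ψ)^2) (Set.Ioc 0 x) :=
      hD2.mono_set Set.Ioc_subset_Ioi_self
    have habs : |φ x| ≤ Real.sqrt (∫ ψ in Set.Ioc 0 x, (deriv φ ψ)^2) * Real.sqrt x := by
      have h1 : |φ x| ≤ ∫ ψ in Set.Ioc 0 x, |deriv φ ψ| * |(1:ℝ)| := by
        rw [hφ0, sub_zero] at hftc
        rw [← hftc, intervalIntegral.integral_of_le (le_of_lt hx)]
        simp only [abs_one, mul_one]
        simpa [Real.norm_eq_abs] using
          (norm_integral_le_integral_norm (μ := volume.restrict (Set.Ioc 0 x)) (deriv φ)).trans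
            (le_of_eq rfl)
      have h2 := my_cs (μ := volume.restrict (Set.Ioc 0 x)) (f := deriv φ) (g := fun _ => (1:ℝ))
        (hdm.mono_measure (Measure.restrict_mono Set.Ioc_subset_Ioi_self le_rfl))
        aestronglyMeasurable_const hIx (by simpa using integrableOn_const (C := (1:ℝ)^2) measure_Ioc_lt_top.ne)
      simp only [one_pow, abs_one, mul_one] at h2 ⊢
      calc |φ x| ≤ ∫ ψ in Set.Ioc 0 x, |deriv φ ψ| := by simpa using h1
        _ ≤ Real.sqrt (∫ ψ in Set.Ioc 0 x, (deriv φ ψ)^2) * Real.sqrt (∫ _ in Set.Ioc 0 x, (1:ℝ)) := by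
            simpa using h2
        _ = Real.sqrt (∫ ψ in Set.Ioc 0 x, (deriv φ ψ)^2) * Real.sqrt x := by
            rw [setIntegral_const]
            simp [Real.volume_Ioc, ENNReal.toReal_ofReal (le_of_lt hx), max_eq_left (le_of_lt (show (0:ℝ) < x from hx))]
    have hsub : (∫ ψ in Set.Ioc 0 x, (deriv φ ψ)^2) ≤ D := by
      apply setIntegral_mono_set hD2
      · exact Filter.Eventually.of_forall fun ψ => sq_nonneg _
      · exact Filter.Eventually.of_forall (fun ψ hψ => Set.Ioc_subset_Ioi_self hψ)
    calc φ x ^ 2 = |φ x| ^ 2 := (sq_abs _).symm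
      _ ≤ (Real.sqrt (∫ ψ in Set.Ioc 0 x, (deriv φ ψ)^2) * Real.sqrt x) ^ 2 := by
          apply sq_le_sq' _ habs
          have : 0 ≤ Real.sqrt (∫ ψ in Set.Ioc 0 x, (deriv φ ψ)^2) * Real.sqrt x := by positivity
          linarith [abs_nonneg (φ x)]
      _ = (∫ ψ in Set.Ioc 0 x, (deriv φ ψ)^2) * x := by
          rw [mul_pow, Real.sq_sqrt (setIntegral_nonneg measurableSet_Ioc fun ψ _ => sq_nonneg _),
              Real.sq_sqrt (le_of_lt hx)]
      _ ≤ x * D := by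
          rw [mul_comm]
          exact mul_le_mul_of_nonneg_left hsub (le_of_lt hx)
  -- Lemma B: sup bound
  have hNnn : 0 ≤ N := setIntegral_nonneg measurableSet_Ioi fun ψ _ => sq_nonneg _
  have hDnn : 0 ≤ D := setIntegral_nonneg measurableSet_Ioi fun ψ _ => sq_nonneg _
  have hcs : ∫ ψ in Set.Ioi (0:ℝ), |φ ψ| * |deriv φ ψ| ≤ Real.sqrt N * Real.sqrt D :=
    my_cs (hφm _ Set.Ioi_subset_Ici_self measurableSet_Ioi) hdm hN2 hD2
  have hB : ∀ x ∈ Set.Ioi (0:ℝ), φ x ^ 2 ≤ 2 * Real.sqrt N * Real.sqrt D := by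
    intro x hx
    have hI2 : IntegrableOn (fun ψ => 2 * (|φ ψ| * |deriv φ ψ|)) (Set.Ioc 0 x) :=
      (hpp.mono_set Set.Ioc_subset_Ioi_self).const_mul 2
    have hI1 : IntegrableOn (fun ψ => 2 * φ ψ * deriv φ ψ) (Set.Ioc 0 x) := by
      refine Integrable.mono' hI2 ?_ ?_
      · exact (((hφm _ (Set.Ioc_subset_Ioi_self.trans Set.Ioi_subset_Ici_self)
          measurableSet_Ioc).const_mul 2).mul
          (hdm.mono_measure (Measure.restrict_mono Set.Ioc_subset_Ioi_self le_rfl)))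
      · refine Filter.Eventually.of_forall fun ψ => ?_
        rw [Real.norm_eq_abs, abs_mul, abs_mul]
        simp [abs_of_nonneg, mul_assoc]
    have hftc2 : ∫ y in (0:ℝ)..x, 2 * φ y * deriv φ y = φ x ^ 2 - φ 0 ^ 2 := by
      apply intervalIntegral.integral_eq_sub_of_hasDeriv_right_of_le (le_of_lt hx)
        ((hφc.mono (fun y hy => hy.1)).pow 2)
      · intro y hy
        have h := ((hderivAt y hy.1).pow 2).hasDerivWithinAt (s := Set.Ioi y)
        simpa [pow_one, mul_comm, mul_assoc, mul_left_comm] using h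
      · exact (intervalIntegrable_iff_integrableOn_Ioc_of_le (le_of_lt hx)).2 hI1
    have e1 : φ x ^ 2 = ∫ ψ in Set.Ioc 0 x, 2 * φ ψ * deriv φ ψ := by
      rw [← intervalIntegral.integral_of_le (le_of_lt hx), hftc2, hφ0]
      ring
    have e2 : (∫ ψ in Set.Ioc 0 x, 2 * φ ψ * deriv φ ψ)
        ≤ ∫ ψ in Set.Ioc 0 x, 2 * (|φ ψ| * |deriv φ ψ|) := by
      apply setIntegral_mono_on hI1 hI2 measurableSet_Ioc
      intro ψ _
      rw [mul_assoc]
      have : φ ψ * deriv φ ψ ≤ |φ ψ| * |deriv φ ψ| := by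
        rw [← abs_mul]; exact le_abs_self _
      linarith
    have e3 : (∫ ψ in Set.Ioc 0 x, 2 * (|φ ψ| * |deriv φ ψ|))
        ≤ ∫ ψ in Set.Ioi (0:ℝ), 2 * (|φ ψ| * |deriv φ ψ|) := by
      apply setIntegral_mono_set (hpp.const_mul 2)
      · exact Filter.Eventually.of_forall fun ψ => by positivity
      · exact Filter.Eventually.of_forall fun ψ hψ => Set.Ioc_subset_Ioi_self hψ
    have e4 : (∫ ψ in Set.Ioi (0:ℝ), 2 * (|φ ψ| * |deriv φ ψ|))
        = 2 * ∫ ψ in Set.Ioi (0:ℝ), |φ ψ| * |deriv φ ψ| := integral_const_mul 2 _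
    rw [e1]
    calc (∫ ψ in Set.Ioc 0 x, 2 * φ ψ * deriv φ ψ)
        ≤ 2 * ∫ ψ in Set.Ioi (0:ℝ), |φ ψ| * |deriv φ ψ| := by rw [← e4]; exact e2.trans e3
      _ ≤ 2 * (Real.sqrt N * Real.sqrt D) := by linarith
      _ = 2 * Real.sqrt N * Real.sqrt D := by ring
  -- split the integral at R
  have hsplit : N = (∫ ψ in Set.Ioc 0 R, φ ψ ^ 2) + ∫ ψ in Set.Ioi R, φ ψ ^ 2 := by
    rw [hNdef, ← setIntegral_union (Set.Ioc_disjoint_Ioi le_rfl) measurableSet_Ioi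
      (hN2.mono_set Set.Ioc_subset_Ioi_self) (hN2.mono_set (Set.Ioi_subset_Ioi (le_of_lt hR))),
      Set.Ioc_union_Ioi_eq_Ioi (le_of_lt hR)]
  -- bound on (0, R]
  have hlin : IntegrableOn (fun ψ => ψ * D) (Set.Ioc 0 R) :=
    (continuous_id.mul continuous_const).integrableOn_Ioc
  have h1 : (∫ ψ in Set.Ioc 0 R, φ ψ ^ 2) ≤ D * R ^ 2 / 2 := by
    have hmono : (∫ ψ in Set.Ioc 0 R, φ ψ ^ 2) ≤ ∫ ψ in Set.Ioc 0 R, ψ * D :=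
      setIntegral_mono_on (hN2.mono_set Set.Ioc_subset_Ioi_self) hlin measurableSet_Ioc
        (fun ψ hψ => hA ψ hψ.1)
    have hval : (∫ ψ in Set.Ioc 0 R, ψ * D) = D * R ^ 2 / 2 := by
      rw [← intervalIntegral.integral_of_le (le_of_lt hR), intervalIntegral.integral_mul_const,
        integral_id]
      ring
    linarith
  -- bound on (R, ∞)
  have hKnn : 0 ≤ K := Real.sqrt_nonneg _
  have hbig : ∀ ψ ∈ Set.Ioi R, |φ ψ| ≤ R ^ (-α) * (ψ ^ α * |φ ψ|) := by
    intro ψ hψ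
    have hψ0 : (0:ℝ) < ψ := lt_trans hR hψ
    have hrα : R ^ α ≤ ψ ^ α := Real.rpow_le_rpow (le_of_lt hR) (le_of_lt hψ) hα0
    have hRα : (0:ℝ) < R ^ α := Real.rpow_pos_of_pos hR _
    have h1 : (1:ℝ) ≤ R ^ (-α) * ψ ^ α := by
      rw [Real.rpow_neg (le_of_lt hR), ← div_eq_inv_mul, le_div_iff₀ hRα, one_mul]
      exact hrα
    calc |φ ψ| = 1 * |φ ψ| := (one_mul _).symm
      _ ≤ (R ^ (-α) * ψ ^ α) * |φ ψ| := mul_le_mul_of_nonneg_right h1 (abs_nonneg _)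
      _ = R ^ (-α) * (ψ ^ α * |φ ψ|) := by ring
  have hwInt : IntegrableOn (fun ψ => R ^ (-α) * (ψ ^ α * |φ ψ|)) (Set.Ioi R) :=
    (hM1.mono_set (Set.Ioi_subset_Ioi (le_of_lt hR))).const_mul _
  have hφabsInt : IntegrableOn (fun ψ => |φ ψ|) (Set.Ioi R) := by
    refine Integrable.mono' hwInt
      ((hφm _ ((Set.Ioi_subset_Ioi (le_of_lt hR)).trans Set.Ioi_subset_Ici_self)
        measurableSet_Ioi).norm) ?_
    rw [ae_restrict_iff' measurableSet_Ioi]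
    refine Filter.Eventually.of_forall fun ψ hψ => ?_
    simpa [Real.norm_eq_abs, abs_abs] using hbig ψ hψ
  have h2 : (∫ ψ in Set.Ioi R, φ ψ ^ 2) ≤ K * (R ^ (-α) * M) := by
    have hKInt : IntegrableOn (fun ψ => K * |φ ψ|) (Set.Ioi R) := hφabsInt.const_mul _
    have step1 : (∫ ψ in Set.Ioi R, φ ψ ^ 2) ≤ ∫ ψ in Set.Ioi R, K * |φ ψ| := by
      apply setIntegral_mono_on (hN2.mono_set (Set.Ioi_subset_Ioi (le_of_lt hR))) hKInt
        measurableSet_Ioi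
      intro ψ hψ
      have hψ0 : ψ ∈ Set.Ioi (0:ℝ) := lt_trans hR hψ
      have hKsq : φ ψ ^ 2 ≤ K ^ 2 := by
        rw [hKdef, Real.sq_sqrt (by positivity)]
        exact hB ψ hψ0
      have habs : |φ ψ| ≤ K := by
        rw [← Real.sqrt_sq_eq_abs]
        exact (Real.sqrt_le_sqrt hKsq).trans_eq (Real.sqrt_sq hKnn)
      calc φ ψ ^ 2 = |φ ψ| * |φ ψ| := by rw [← abs_mul, abs_mul_self]; ring
        _ ≤ K * |φ ψ| := mul_le_mul_of_nonneg_right habs (abs_nonneg _)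
    have step2 : (∫ ψ in Set.Ioi R, K * |φ ψ|) = K * ∫ ψ in Set.Ioi R, |φ ψ| :=
      integral_const_mul _ _
    have step3 : (∫ ψ in Set.Ioi R, |φ ψ|) ≤ ∫ ψ in Set.Ioi R, R ^ (-α) * (ψ ^ α * |φ ψ|) :=
      setIntegral_mono_on hφabsInt hwInt measurableSet_Ioi hbig
    have step4 : (∫ ψ in Set.Ioi R, R ^ (-α) * (ψ ^ α * |φ ψ|))
        = R ^ (-α) * ∫ ψ in Set.Ioi R, ψ ^ α * |φ ψ| := integral_const_mul _ _
    have step5 : (∫ ψ in Set.Ioi R, ψ ^ α * |φ ψ|) ≤ M := by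
      apply setIntegral_mono_set hM1
      · filter_upwards [ae_restrict_mem measurableSet_Ioi] with ψ hψ
        exact mul_nonneg (Real.rpow_nonneg (le_of_lt hψ) _) (abs_nonneg _)
      · exact Filter.Eventually.of_forall fun ψ hψ => Set.Ioi_subset_Ioi (le_of_lt hR) hψ
    have hRα : (0:ℝ) ≤ R ^ (-α) := le_of_lt (Real.rpow_pos_of_pos hR _)
    calc (∫ ψ in Set.Ioi R, φ ψ ^ 2) ≤ K * ∫ ψ in Set.Ioi R, |φ ψ| := by
          rw [← step2]; exact step1
      _ ≤ K * (R ^ (-α) * M) := by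
          apply mul_le_mul_of_nonneg_left _ hKnn
          calc (∫ ψ in Set.Ioi R, |φ ψ|) ≤ R ^ (-α) * ∫ ψ in Set.Ioi R, ψ ^ α * |φ ψ| := by
                rw [← step4]; exact step3
            _ ≤ R ^ (-α) * M := mul_le_mul_of_nonneg_left step5 hRα
  linarith [hsplit, h1, h2]


lemma final_alg (α N D M : ℝ) (hα0 : 0 ≤ α) (hα1 : α ≤ 1) (hN : 0 < N) (hD : 0 < D) (hM : 0 ≤ M)
    (h : (3/4) * N ≤ Real.sqrt (2 * Real.sqrt N * Real.sqrt D) *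
      ((Real.sqrt (N/(2*D))) ^ (-α) * M)) :
    N ^ ((3 + 2*α)/2) ≤ 8 * M ^ 2 * D ^ ((1 + 2*α)/2) := by
  have hR : (0:ℝ) < Real.sqrt (N/(2*D)) := Real.sqrt_pos.2 (by positivity)
  have hK : (0:ℝ) < Real.sqrt (2 * Real.sqrt N * Real.sqrt D) := Real.sqrt_pos.2 (by positivity)
  have hM' : 0 < M := by
    by_contra hM0
    push_neg at hM0
    have hr : (0:ℝ) < (Real.sqrt (N/(2*D))) ^ (-α) := Real.rpow_pos_of_pos hR _
    have hle : Real.sqrt (2 * Real.sqrt N * Real.sqrt D) * ((Real.sqrt (N/(2*D))) ^ (-α) * M) ≤ 0 :=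
      mul_nonpos_of_nonneg_of_nonpos hK.le (mul_nonpos_of_nonneg_of_nonpos hr.le hM0)
    linarith
  have h2 : (0:ℝ) < Real.log 2 := Real.log_pos one_lt_two
  have h43 : Real.log 4 - Real.log 3 ≤ (1/2) * Real.log 2 := by
    have h1 : Real.log (4/3) ≤ Real.log (Real.sqrt 2) := by
      apply Real.log_le_log (by norm_num)
      nlinarith [Real.sq_sqrt (by norm_num : (0:ℝ) ≤ 2), Real.sqrt_nonneg 2]
    rw [Real.log_div (by norm_num) (by norm_num), Real.log_sqrt (by norm_num)] at h1
    linarith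
  have h8 : Real.log 8 = 3 * Real.log 2 := by
    rw [show (8:ℝ) = 2^(3:ℕ) by norm_num, Real.log_pow]; push_cast; ring
  have h34 : Real.log (3/4) = Real.log 3 - Real.log 4 := Real.log_div (by norm_num) (by norm_num)
  have lK : Real.log (Real.sqrt (2 * Real.sqrt N * Real.sqrt D))
      = (Real.log 2 + Real.log N / 2 + Real.log D / 2)/2 := by
    rw [Real.log_sqrt (by positivity), Real.log_mul (by positivity) (by positivity),
        Real.log_mul (by positivity) (by positivity), Real.log_sqrt hN.le, Real.log_sqrt hD.le]
  have lR : Real.log (Real.sqrt (N/(2*D))) = (Real.log N - (Real.log 2 + Real.log D))/2 := by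
    rw [Real.log_sqrt (by positivity), Real.log_div (by positivity) (by positivity),
        Real.log_mul (by positivity) (by positivity)]
  have hlog := Real.log_le_log (by positivity) h
  rw [Real.log_mul (by norm_num) (by positivity),
      Real.log_mul (by positivity) (by positivity),
      Real.log_mul (by positivity) (by positivity),
      Real.log_rpow hR, lK, lR, h34] at hlog
  rw [← Real.log_le_log_iff (by positivity) (by positivity),
      Real.log_rpow hN, Real.log_mul (by positivity) (by positivity),
      Real.log_mul (by norm_num) (by positivity), Real.log_pow, Real.log_rpow hD, h8]
  push_cast
  linarith [mul_nonneg (sub_nonneg.2 hα1) h2.le, hlog, h43]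

theorem nash_weighted_interpolation (α : ℝ) (hα : α ∈ Set.Icc (0:ℝ) 1) :
    ∃ C > (0:ℝ), ∀ φ : ℝ → ℝ,
      ContDiffOn ℝ 1 φ (Set.Ici 0) → φ 0 = 0 →
      MeasureTheory.IntegrableOn (fun ψ => φ ψ ^ 2) (Set.Ioi 0) →
      MeasureTheory.IntegrableOn (fun ψ => (deriv φ ψ) ^ 2) (Set.Ioi 0) →
      MeasureTheory.IntegrableOn (fun ψ => ψ ^ α * |φ ψ|) (Set.Ioi 0) →
      (∫ ψ in Set.Ioi (0:ℝ), φ ψ ^ 2) ^ ((3 + 2*α) / 2) ≤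
        C * (∫ ψ in Set.Ioi (0:ℝ), ψ ^ α * |φ ψ|) ^ 2 *
          (∫ ψ in Set.Ioi (0:ℝ), (deriv φ ψ) ^ 2) ^ ((1 + 2*α) / 2) := by
  obtain ⟨hα0, hα1⟩ := hα
  refine ⟨8, by norm_num, ?_⟩
  intro φ hφ hφ0 hN2 hD2 hM1
  set N := ∫ ψ in Set.Ioi (0:ℝ), φ ψ ^ 2 with hNdef
  set D := ∫ ψ in Set.Ioi (0:ℝ), (deriv φ ψ) ^ 2 with hDdef
  set M := ∫ ψ in Set.Ioi (0:ℝ), ψ ^ α * |φ ψ| with hMdef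
  have hNnn : 0 ≤ N := setIntegral_nonneg measurableSet_Ioi fun ψ _ => sq_nonneg _
  have hDnn : 0 ≤ D := setIntegral_nonneg measurableSet_Ioi fun ψ _ => sq_nonneg _
  have hMnn : 0 ≤ M := setIntegral_nonneg measurableSet_Ioi fun ψ hψ =>
    mul_nonneg (Real.rpow_nonneg (le_of_lt hψ) _) (abs_nonneg _)
  have master := nash_master α ⟨hα0, hα1⟩ φ hφ hφ0 hN2 hD2 hM1
  rcases eq_or_lt_of_le hNnn with hN0 | hN
  · rw [← hN0, Real.zero_rpow (by positivity)]
    exact mul_nonneg (mul_nonneg (by norm_num) (sq_nonneg M)) (Real.rpow_nonneg hDnn _)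
  · have hD : 0 < D := by
      rcases eq_or_lt_of_le hDnn with hD0 | hD
      · exfalso
        have h1 := master 1 one_pos
        rw [← hNdef, ← hDdef, ← hMdef, ← hD0] at h1
        simp only [zero_mul, mul_zero, Real.sqrt_zero, zero_div] at h1
        linarith
      · exact hD
    set R := Real.sqrt (N/(2*D)) with hRdef
    have hRpos : 0 < R := Real.sqrt_pos.2 (by positivity)
    have hRsq : R ^ 2 = N/(2*D) := Real.sq_sqrt (by positivity)
    have hm := master R hRpos
    rw [← hNdef, ← hDdef, ← hMdef] at hm
    have hquart : D * R ^ 2 / 2 = N / 4 := by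
      rw [hRsq]; field_simp; ring
    have h34 : (3/4) * N ≤ Real.sqrt (2 * Real.sqrt N * Real.sqrt D) * (R ^ (-α) * M) := by
      linarith
    exact final_alg α N D M hα0 hα1 hN hD hMnn h34
end

section
/- Let s ∈ (0,1) and let φ : [0,∞) → ℝ be C¹ with φ(0) = 0, with D := ∫₀^∞ |φ'(ψ)|² dψ < ∞ and W := ∫₀^∞ |φ(ψ)|²·ψ^s dψ < ∞. Then there is a constant C = C(s) such that ∫₀^∞ |φ(ψ)|² dψ ≤ C·D^{s/(2+s)}·W^{2/(2+s)}. -/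
open MeasureTheory Set Real
open scoped ENNReal NNReal

lemma pointwise_bound (φ : ℝ → ℝ) (hφ : ContDiffOn ℝ 1 φ (Set.Ici 0)) (hφ0 : φ 0 = 0)
    (hD : MeasureTheory.IntegrableOn (fun ψ => (deriv φ ψ) ^ 2) (Set.Ioi 0))
    {ψ : ℝ} (hψ : 0 < ψ) :
    φ ψ ^ 2 ≤ ψ * ∫ t in Set.Ioi (0:ℝ), (deriv φ t) ^ 2 := by
  set D := ∫ t in Set.Ioi (0:ℝ), (deriv φ t) ^ 2 with hDdef
  have hmeas : Measurable (deriv φ) := measurable_deriv φ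
  have hsq : IntegrableOn (fun t => (deriv φ t) ^ 2) (Ioc 0 ψ) :=
    hD.mono_set Ioc_subset_Ioi_self
  have hint : IntegrableOn (deriv φ) (Ioc 0 ψ) := by
    have h : IntegrableOn (fun t => (1 + (deriv φ t) ^ 2)/2) (Ioc 0 ψ) := by
      apply Integrable.div_const
      exact (integrableOn_const measure_Ioc_lt_top.ne).add hsq
    refine Integrable.mono h (hmeas.aestronglyMeasurable) ?_
    filter_upwards with t
    have h2 : (0:ℝ) ≤ (1 + (deriv φ t)^2)/2 := by positivity
    rw [Real.norm_eq_abs, Real.norm_eq_abs, abs_of_nonneg h2]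
    nlinarith [sq_nonneg (|deriv φ t| - 1), sq_abs (deriv φ t)]
  -- FTC
  have hftc : ∫ t in (0:ℝ)..ψ, deriv φ t = φ ψ - φ 0 := by
    apply intervalIntegral.integral_eq_sub_of_hasDeriv_right_of_le hψ.le
    · exact (hφ.continuousOn).mono (fun x hx => hx.1)
    · intro x hx
      have hd : HasDerivAt φ (deriv φ x) x :=
        ((hφ.contDiffAt (Ici_mem_nhds hx.1)).differentiableAt one_ne_zero).hasDerivAt
      exact hd.hasDerivWithinAt
    · exact (intervalIntegrable_iff_integrableOn_Ioc_of_le hψ.le).mpr hint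
  have hφψ : φ ψ = ∫ t in Ioc (0:ℝ) ψ, deriv φ t := by
    rw [← intervalIntegral.integral_of_le hψ.le, hftc, hφ0, sub_zero]
  have habs : |φ ψ| ≤ ∫ t in Ioc (0:ℝ) ψ, |deriv φ t| := by
    rw [hφψ]
    simpa [Real.norm_eq_abs] using
      norm_integral_le_integral_norm (μ := volume.restrict (Ioc (0:ℝ) ψ)) (deriv φ)
  -- Cauchy-Schwarz via Hölder
  have hfin : IsFiniteMeasure (volume.restrict (Ioc (0:ℝ) ψ)) :=
    ⟨by simpa using measure_Ioc_lt_top⟩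
  have hmem : MemLp (fun t => |deriv φ t|) (ENNReal.ofReal 2) (volume.restrict (Ioc (0:ℝ) ψ)) := by
    rw [show ENNReal.ofReal 2 = (2:ℝ≥0∞) by norm_num]
    rw [memLp_two_iff_integrable_sq (hmeas.abs.aestronglyMeasurable)]
    simpa [sq_abs, IntegrableOn] using hsq
  have hone : MemLp (fun _ : ℝ => (1:ℝ)) (ENNReal.ofReal 2) (volume.restrict (Ioc (0:ℝ) ψ)) :=
    memLp_const 1
  have hCS := integral_mul_le_Lp_mul_Lq_of_nonneg Real.HolderConjugate.two_two
      (f := fun t => |deriv φ t|) (g := fun _ => (1:ℝ))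
      (Filter.Eventually.of_forall (fun t => abs_nonneg _))
      (Filter.Eventually.of_forall (fun t => zero_le_one)) hmem hone
  simp only [mul_one] at hCS
  have hvol : ∫ _t in Ioc (0:ℝ) ψ, (1:ℝ)^(2:ℝ) = ψ := by
    simp only [Real.one_rpow, MeasureTheory.setIntegral_const, smul_eq_mul, mul_one, measureReal_def,
      Real.volume_Ioc, sub_zero, ENNReal.toReal_ofReal hψ.le]
  set A := ∫ t in Ioc (0:ℝ) ψ, (deriv φ t) ^ 2 with hAdef
  have hA : 0 ≤ A := setIntegral_nonneg measurableSet_Ioc (fun t _ => sq_nonneg _)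
  have hDpos : 0 ≤ D := setIntegral_nonneg measurableSet_Ioi (fun t _ => sq_nonneg _)
  have hAeq : (∫ t in Ioc (0:ℝ) ψ, |deriv φ t| ^ (2:ℝ)) = A := by
    rw [hAdef]
    congr 1
    ext t
    rw [show ((2:ℝ)) = ((2:ℕ):ℝ) by norm_num, Real.rpow_natCast, sq_abs]
  have hAD : A ≤ D := by
    rw [hAdef, hDdef]
    apply setIntegral_mono_set hD
    · filter_upwards with t using sq_nonneg _
    · exact HasSubset.Subset.eventuallyLE Ioc_subset_Ioi_self
  have h3 : |φ ψ| ≤ A ^ ((1:ℝ)/2) * ψ ^ ((1:ℝ)/2) := by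
    refine habs.trans ?_
    calc ∫ t in Ioc (0:ℝ) ψ, |deriv φ t|
        ≤ (∫ t in Ioc (0:ℝ) ψ, |deriv φ t| ^ (2:ℝ)) ^ ((1:ℝ)/2) * (∫ _t in Ioc (0:ℝ) ψ, (1:ℝ)^(2:ℝ)) ^ ((1:ℝ)/2) := hCS
      _ = A ^ ((1:ℝ)/2) * ψ ^ ((1:ℝ)/2) := by rw [hvol, hAeq]
  have h4 : φ ψ ^ 2 ≤ (A ^ ((1:ℝ)/2) * ψ ^ ((1:ℝ)/2)) ^ 2 := by
    rw [← sq_abs]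
    exact pow_le_pow_left₀ (abs_nonneg _) h3 2
  have h5 : (A ^ ((1:ℝ)/2) * ψ ^ ((1:ℝ)/2)) ^ 2 = A * ψ := by
    rw [mul_pow]
    rw [← Real.rpow_natCast (A ^ ((1:ℝ)/2)) 2, ← Real.rpow_natCast (ψ ^ ((1:ℝ)/2)) 2,
      ← Real.rpow_mul hA, ← Real.rpow_mul hψ.le]
    norm_num
  refine h4.trans ?_
  rw [h5, mul_comm]
  exact mul_le_mul_of_nonneg_left hAD hψ.le

lemma split_bound (s : ℝ) (hs : 0 < s) (φ : ℝ → ℝ)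
    (hφ : ContDiffOn ℝ 1 φ (Set.Ici 0)) (hφ0 : φ 0 = 0)
    (hD : MeasureTheory.IntegrableOn (fun ψ => (deriv φ ψ) ^ 2) (Set.Ioi 0))
    (hW : MeasureTheory.IntegrableOn (fun ψ => φ ψ ^ 2 * ψ ^ s) (Set.Ioi 0))
    {r : ℝ} (hr : 0 < r) :
    (∫ ψ in Set.Ioi (0:ℝ), φ ψ ^ 2) ≤
      (∫ ψ in Set.Ioi (0:ℝ), (deriv φ ψ) ^ 2) * r ^ 2 / 2 +
      (∫ ψ in Set.Ioi (0:ℝ), φ ψ ^ 2 * ψ ^ s) * r ^ (-s) := by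
  set D := ∫ t in Set.Ioi (0:ℝ), (deriv φ t) ^ 2 with hDdef
  set W := ∫ t in Set.Ioi (0:ℝ), φ t ^ 2 * t ^ s with hWdef
  have hcont : ContinuousOn (fun ψ => φ ψ ^ 2) (Ici 0) := (hφ.continuousOn).pow 2
  have I1 : IntegrableOn (fun ψ => φ ψ ^ 2) (Ioc 0 r) :=
    ((hcont.mono (Icc_subset_Ici_self (a := r) (b := 0))).integrableOn_Icc).mono_set Ioc_subset_Icc_self
  have I2 : IntegrableOn (fun ψ => φ ψ ^ 2) (Ioi r) := by
    have hg : IntegrableOn (fun ψ => φ ψ ^ 2 * ψ ^ s * r ^ (-s)) (Ioi r) :=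
      (hW.mono_set (Ioi_subset_Ioi hr.le)).mul_const _
    refine Integrable.mono hg ((hcont.mono (fun x hx => le_of_lt (hr.trans hx))).aestronglyMeasurable measurableSet_Ioi) ?_
    filter_upwards [ae_restrict_mem measurableSet_Ioi] with t ht
    have htr : r ≤ t := le_of_lt ht
    have h1 : (1:ℝ) ≤ t ^ s * r ^ (-s) := by
      rw [Real.rpow_neg hr.le]
      rw [← div_eq_mul_inv, le_div_iff₀ (Real.rpow_pos_of_pos hr _)]
      simpa using Real.rpow_le_rpow hr.le htr hs.le
    have h2 : φ t ^ 2 ≤ φ t ^ 2 * t ^ s * r ^ (-s) := by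
      calc φ t ^ 2 = φ t ^ 2 * 1 := by ring
        _ ≤ φ t ^ 2 * (t ^ s * r ^ (-s)) := by
            exact mul_le_mul_of_nonneg_left h1 (sq_nonneg _)
        _ = φ t ^ 2 * t ^ s * r ^ (-s) := by ring
    rw [Real.norm_eq_abs, Real.norm_eq_abs, abs_of_nonneg (sq_nonneg _)]
    refine h2.trans (le_abs_self _)
  have hsplit : (∫ ψ in Set.Ioi (0:ℝ), φ ψ ^ 2) =
      (∫ ψ in Ioc (0:ℝ) r, φ ψ ^ 2) + (∫ ψ in Ioi r, φ ψ ^ 2) := by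
    rw [← setIntegral_union (Set.Ioc_disjoint_Ioi le_rfl) measurableSet_Ioi I1 I2,
      Set.Ioc_union_Ioi_eq_Ioi hr.le]
  have bound1 : (∫ ψ in Ioc (0:ℝ) r, φ ψ ^ 2) ≤ D * r ^ 2 / 2 := by
    have Ig : IntegrableOn (fun ψ : ℝ => ψ * D) (Ioc 0 r) :=
      (continuous_id.mul continuous_const).integrableOn_Ioc
    have := setIntegral_mono_on I1 Ig measurableSet_Ioc
      (fun x hx => pointwise_bound φ hφ hφ0 hD hx.1)
    refine this.trans ?_
    rw [← intervalIntegral.integral_of_le hr.le, intervalIntegral.integral_mul_const, integral_id]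
    exact le_of_eq (by ring)
  have bound2 : (∫ ψ in Ioi r, φ ψ ^ 2) ≤ W * r ^ (-s) := by
    have hg : IntegrableOn (fun ψ => φ ψ ^ 2 * ψ ^ s * r ^ (-s)) (Ioi r) :=
      (hW.mono_set (Ioi_subset_Ioi hr.le)).mul_const _
    have step1 := setIntegral_mono_on I2 hg measurableSet_Ioi (fun t ht => by
      have h1 : (1:ℝ) ≤ t ^ s * r ^ (-s) := by
        rw [Real.rpow_neg hr.le]
        rw [← div_eq_mul_inv, le_div_iff₀ (Real.rpow_pos_of_pos hr _)]
        simpa using Real.rpow_le_rpow hr.le (le_of_lt ht) hs.le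
      calc φ t ^ 2 = φ t ^ 2 * 1 := by ring
        _ ≤ φ t ^ 2 * (t ^ s * r ^ (-s)) := mul_le_mul_of_nonneg_left h1 (sq_nonneg _)
        _ = φ t ^ 2 * t ^ s * r ^ (-s) := by ring)
    refine step1.trans ?_
    rw [MeasureTheory.integral_mul_const]
    apply mul_le_mul_of_nonneg_right _ (Real.rpow_nonneg hr.le _)
    apply setIntegral_mono_set hW
    · filter_upwards [ae_restrict_mem measurableSet_Ioi] with t ht
      exact mul_nonneg (sq_nonneg _) (Real.rpow_nonneg (le_of_lt ht) _)
    · exact HasSubset.Subset.eventuallyLE (Ioi_subset_Ioi hr.le)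
  rw [hsplit]
  exact add_le_add bound1 bound2

lemma opt_eq (s : ℝ) (hs : 0 < s) {D W : ℝ} (hD : 0 < D) (hW : 0 < W) :
    D * ((W/D) ^ ((2+s)⁻¹)) ^ 2 / 2 + W * ((W/D) ^ ((2+s)⁻¹)) ^ (-s)
      = 3/2 * D ^ (s/(2+s)) * W ^ (2/(2+s)) := by
  have hc : (0:ℝ) < 2 + s := by linarith
  have hWD : 0 < W / D := div_pos hW hD
  have e2 : (((W/D) ^ ((2+s)⁻¹) : ℝ)) ^ (2:ℕ) = (W/D) ^ (2/(2+s)) := by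
    rw [← Real.rpow_natCast _ 2, ← Real.rpow_mul hWD.le]
    congr 1
    push_cast
    field_simp
  have e3 : (((W/D) ^ ((2+s)⁻¹) : ℝ)) ^ (-s) = (W/D) ^ (-(s/(2+s))) := by
    rw [← Real.rpow_mul hWD.le]
    congr 1
    field_simp
  have hD1 : D ^ (2/(2+s)) * D ^ (s/(2+s)) = D := by
    rw [← Real.rpow_add hD, show 2/(2+s)+s/(2+s) = 1 by field_simp, Real.rpow_one]
  have hW1 : W ^ (s/(2+s)) * W ^ (2/(2+s)) = W := by
    rw [← Real.rpow_add hW, show s/(2+s)+2/(2+s) = 1 by field_simp; ring, Real.rpow_one]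
  have hDp : (0:ℝ) < D ^ (2/(2+s)) := Real.rpow_pos_of_pos hD _
  have hWq : (0:ℝ) < W ^ (s/(2+s)) := Real.rpow_pos_of_pos hW _
  rw [e2, e3, Real.rpow_neg hWD.le, Real.div_rpow hW.le hD.le, Real.div_rpow hW.le hD.le]
  have A : D * (W ^ (2/(2+s)) / D ^ (2/(2+s))) = D ^ (s/(2+s)) * W ^ (2/(2+s)) := by
    rw [mul_div_assoc', div_eq_iff (ne_of_gt hDp)]
    linear_combination (-(W ^ (2/(2+s)))) * hD1
  have B : W * (W ^ (s/(2+s)) / D ^ (s/(2+s)))⁻¹ = D ^ (s/(2+s)) * W ^ (2/(2+s)) := by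
    rw [inv_div, mul_div_assoc', div_eq_iff (ne_of_gt hWq)]
    linear_combination (-(D ^ (s/(2+s)))) * hW1
  rw [A, B]
  ring

theorem weighted_L2_interpolation (s : ℝ) (hs : s ∈ Set.Ioo (0:ℝ) 1) :
    ∃ C > (0:ℝ), ∀ φ : ℝ → ℝ,
      ContDiffOn ℝ 1 φ (Set.Ici 0) → φ 0 = 0 →
      MeasureTheory.IntegrableOn (fun ψ => (deriv φ ψ) ^ 2) (Set.Ioi 0) →
      MeasureTheory.IntegrableOn (fun ψ => φ ψ ^ 2 * ψ ^ s) (Set.Ioi 0) →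
      (∫ ψ in Set.Ioi (0:ℝ), φ ψ ^ 2) ≤
        C * (∫ ψ in Set.Ioi (0:ℝ), (deriv φ ψ) ^ 2) ^ (s / (2 + s)) *
          (∫ ψ in Set.Ioi (0:ℝ), φ ψ ^ 2 * ψ ^ s) ^ (2 / (2 + s)) := by
  obtain ⟨hs0, _hs1⟩ := hs
  refine ⟨3/2, by norm_num, fun φ hφ hφ0 hD hW => ?_⟩
  set D := ∫ t in Set.Ioi (0:ℝ), (deriv φ t) ^ 2 with hDdef
  set W := ∫ t in Set.Ioi (0:ℝ), φ t ^ 2 * t ^ s with hWdef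
  have hD0 : 0 ≤ D := setIntegral_nonneg measurableSet_Ioi (fun t _ => sq_nonneg _)
  have hW0 : 0 ≤ W := setIntegral_nonneg measurableSet_Ioi
    (fun t ht => mul_nonneg (sq_nonneg _) (Real.rpow_nonneg (le_of_lt ht) _))
  have hq : s / (2 + s) ≠ 0 := by positivity
  have hp : 2 / (2 + s) ≠ 0 := by positivity
  rcases eq_or_lt_of_le hD0 with hDz | hDpos
  · -- D = 0 : LHS ≤ 0 and RHS = 0
    have hRHS : (3:ℝ)/2 * D ^ (s / (2 + s)) * W ^ (2 / (2 + s)) = 0 := by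
      rw [← hDz, Real.zero_rpow hq]; ring
    rw [hRHS]
    have hlim : Filter.Tendsto (fun r : ℝ => W * r ^ (-s)) Filter.atTop (nhds 0) := by
      have := (tendsto_rpow_neg_atTop hs0).const_mul W
      simpa using this
    refine ge_of_tendsto hlim ?_
    filter_upwards [Filter.eventually_gt_atTop (0:ℝ)] with r hr
    have := split_bound s hs0 φ hφ hφ0 hD hW hr
    rw [← hDdef, ← hWdef] at this
    rw [← hDz] at this
    simpa using this
  · rcases eq_or_lt_of_le hW0 with hWz | hWpos
    · -- W = 0 : LHS ≤ 0 and RHS = 0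
      have hRHS : (3:ℝ)/2 * D ^ (s / (2 + s)) * W ^ (2 / (2 + s)) = 0 := by
        rw [← hWz, Real.zero_rpow hp]; ring
      rw [hRHS]
      have hlim : Filter.Tendsto (fun r : ℝ => D * r ^ 2 / 2) (nhdsWithin 0 (Set.Ioi 0)) (nhds 0) := by
        have hcont : Filter.Tendsto (fun r : ℝ => D * r ^ 2 / 2) (nhds 0) (nhds (D * 0 ^ 2 / 2)) :=
          ((continuous_const.mul (continuous_pow 2)).div_const 2).tendsto 0
        simpa using hcont.mono_left nhdsWithin_le_nhds
      refine ge_of_tendsto hlim ?_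
      filter_upwards [self_mem_nhdsWithin] with r hr
      have := split_bound s hs0 φ hφ hφ0 hD hW hr
      rw [← hDdef, ← hWdef] at this
      rw [← hWz] at this
      simpa using this
    · -- main case
      set r := (W / D) ^ ((2+s)⁻¹) with hrdef
      have hr : 0 < r := Real.rpow_pos_of_pos (div_pos hWpos hDpos) _
      have h1 := split_bound s hs0 φ hφ hφ0 hD hW hr
      rw [← hDdef, ← hWdef] at h1
      refine h1.trans (le_of_eq ?_)
      exact opt_eq s hs0 hDpos hWpos
end

section
/- Let c₀, c₁ > 0, p > 1, b > 0, β > 0 with β·p ≤ b and β·p ≤ β + 1. Let A : [0,∞) → [0,∞) be continuously differentiable and satisfy A'(X) + c₀·A(X)^p ≤ c₁·(X+1)^{−b} for all X ≥ 0. Then there exists a constant D > 0 (depending only on c₀, c₁, p, β, and A(0)) such that A(X) ≤ D·(X+1)^{−β} for all X ≥ 0. -/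
open Set

theorem barrier_decay_lemma (c₀ c₁ p b β : ℝ) (hc₀ : 0 < c₀) (hc₁ : 0 < c₁)
    (hp : 1 < p) (hb : 0 < b) (hβ : 0 < β)
    (h1 : β * p ≤ b) (h2 : β * p ≤ β + 1)
    (A : ℝ → ℝ) (hA : ContDiff ℝ 1 A) (hAnn : ∀ X ≥ (0:ℝ), 0 ≤ A X)
    (hdiff : ∀ X ≥ (0:ℝ), deriv A X + c₀ * A X ^ p ≤ c₁ * (X + 1) ^ (-b)) :
    ∃ D > (0:ℝ), ∀ X ≥ (0:ℝ), A X ≤ D * (X + 1) ^ (-β) := by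
  set r : ℝ := ((c₁ + β + 1) / c₀) ^ (1 / (p - 1)) with hr
  set D : ℝ := max (max 1 (A 0)) r with hD
  have hp1 : 0 < p - 1 := by linarith
  have hD1 : (1:ℝ) ≤ D := le_trans (le_max_left 1 (A 0)) (le_max_left _ _)
  have hDpos : 0 < D := lt_of_lt_of_le one_pos hD1
  have hDA : A 0 ≤ D := le_trans (le_max_right 1 (A 0)) (le_max_left _ _)
  have hrnn : 0 ≤ (c₁ + β + 1) / c₀ := by positivity
  -- key algebraic inequality : c₁ + β * D < c₀ * D ^ p
  have hkey : c₁ + β * D < c₀ * D ^ p := by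
    have hDr : r ≤ D := le_max_right _ _
    have h3 : ((c₁ + β + 1) / c₀) ≤ D ^ (p - 1) := by
      calc (c₁ + β + 1) / c₀ = (((c₁ + β + 1) / c₀) ^ (1 / (p - 1))) ^ (p - 1) := by
            rw [← Real.rpow_mul hrnn, one_div_mul_cancel (ne_of_gt hp1), Real.rpow_one]
        _ ≤ D ^ (p - 1) := by
            apply Real.rpow_le_rpow (Real.rpow_nonneg hrnn _) hDr hp1.le
    have h4 : c₁ + β + 1 ≤ c₀ * D ^ (p - 1) := by
      rw [div_le_iff₀ hc₀] at h3; linarith [h3]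
    have h5 : c₀ * D ^ p = c₀ * D ^ (p - 1) * D := by
      rw [mul_assoc, ← Real.rpow_add_one (ne_of_gt hDpos)]
      ring_nf
    rw [h5]
    calc c₁ + β * D < (c₁ + β + 1) * D := by nlinarith
      _ ≤ c₀ * D ^ (p - 1) * D := by nlinarith
  refine ⟨D, hDpos, fun X hX => ?_⟩
  -- the barrier function
  set B : ℝ → ℝ := fun x => D * (x + 1) ^ (-β) with hBdef
  set B' : ℝ → ℝ := fun x => D * (-β * (x + 1) ^ (-β - 1)) with hB'def
  have hBderiv : ∀ x : ℝ, 0 ≤ x → HasDerivAt B (B' x) x := by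
    intro x hx
    have hx1 : x + 1 ≠ 0 := by positivity
    have h := (Real.hasDerivAt_rpow_const (x := x + 1) (p := -β) (Or.inl hx1))
    have h2' := h.comp x ((hasDerivAt_id x).add_const 1)
    have h3' := h2'.const_mul D
    refine h3'.congr_deriv ?_
    show _ = D * (-β * (x + 1) ^ (-β - 1))
    ring
  have hBcont : ContinuousOn B (Icc 0 X) := by
    intro x hx
    exact ((hBderiv x hx.1).continuousAt).continuousWithinAt
  have hAderiv : ∀ x : ℝ, HasDerivAt A (deriv A x) x :=
    fun x => ((hA.differentiable one_ne_zero) x).hasDerivAt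
  have hbound : ∀ x ∈ Ico 0 X, A x = B x → deriv A x < B' x := by
    intro x hx hcross
    have hx0 : (0:ℝ) ≤ x := hx.1
    have hx1 : (1:ℝ) ≤ x + 1 := by linarith
    have hx1pos : (0:ℝ) < x + 1 := by linarith
    have hAx : A x = D * (x + 1) ^ (-β) := hcross
    have hAp : A x ^ p = D ^ p * (x + 1) ^ (-(β * p)) := by
      rw [hAx, Real.mul_rpow hDpos.le (Real.rpow_nonneg hx1pos.le _),
        ← Real.rpow_mul hx1pos.le, neg_mul]
    have hd := hdiff x hx0
    have e1 : c₁ * (x + 1) ^ (-b) ≤ c₁ * (x + 1) ^ (-(β * p)) := by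
      apply mul_le_mul_of_nonneg_left _ hc₁.le
      exact Real.rpow_le_rpow_of_exponent_le hx1 (by linarith)
    have e2 : (x + 1) ^ (-(β + 1)) ≤ (x + 1) ^ (-(β * p)) :=
      Real.rpow_le_rpow_of_exponent_le hx1 (by linarith)
    have hpow_pos : (0:ℝ) < (x + 1) ^ (-(β * p)) := Real.rpow_pos_of_pos hx1pos _
    have e3 : deriv A x ≤ (c₁ - c₀ * D ^ p) * (x + 1) ^ (-(β * p)) := by
      nlinarith [hd, e1, hAp]
    have e4 : (c₁ - c₀ * D ^ p) * (x + 1) ^ (-(β * p)) <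
        (-(β * D)) * (x + 1) ^ (-(β * p)) := by
      apply mul_lt_mul_of_pos_right _ hpow_pos
      linarith
    have e5 : (-(β * D)) * (x + 1) ^ (-(β * p)) ≤ (-(β * D)) * (x + 1) ^ (-(β + 1)) := by
      have : (0:ℝ) < β * D := by positivity
      nlinarith [e2]
    have : B' x = (-(β * D)) * (x + 1) ^ (-(β + 1)) := by
      simp only [hB'def]
      rw [show -β - 1 = -(β + 1) by ring]
      ring
    rw [this]
    linarith
  have main : ∀ ⦃x⦄, x ∈ Icc 0 X → A x ≤ B x :=
    image_le_of_deriv_right_lt_deriv_boundary' (f' := fun x => deriv A x)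
      (hA.continuous).continuousOn (fun x _ => (hAderiv x).hasDerivWithinAt)
      (by simpa [hBdef] using hDA) hBcont
      (fun x hx => (hBderiv x hx.1).hasDerivWithinAt) hbound
  have := main ⟨le_refl 0 |>.trans hX, le_refl X⟩
  simpa [hBdef] using this
end

section
/- Let c₀, c₁ > 0, p > 1, q > 1, a ≥ 0, b > 0, β > 0 satisfy a + β·p ≤ min(b, β+1) and β·q ≤ min(b, β+1). Let A : [0,∞) → [0,∞) be continuously differentiable and satisfy A'(X) + c₀·min{ (X+1)^{−a}·A(X)^p , A(X)^q } ≤ c₁·(X+1)^{−b} for all X ≥ 0. Then there exists D > 0 (depending only on c₀, c₁, p, q, a, β, and A(0)) such that A(X) ≤ D·(X+1)^{−β} for all X ≥ 0. -/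
set_option maxHeartbeats 1000000


theorem barrier_decay_lemma_two_branch (c₀ c₁ p q a b β : ℝ)
    (hc₀ : 0 < c₀) (hc₁ : 0 < c₁) (hp : 1 < p) (hq : 1 < q)
    (ha : 0 ≤ a) (hb : 0 < b) (hβ : 0 < β)
    (h1 : a + β * p ≤ min b (β + 1)) (h2 : β * q ≤ min b (β + 1))
    (A : ℝ → ℝ) (hA : ContDiff ℝ 1 A) (hAnn : ∀ X ≥ (0:ℝ), 0 ≤ A X)
    (hdiff : ∀ X ≥ (0:ℝ),
      deriv A X + c₀ * min ((X + 1) ^ (-a) * A X ^ p) (A X ^ q) ≤ c₁ * (X + 1) ^ (-b)) :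
    ∃ D > (0:ℝ), ∀ X ≥ (0:ℝ), A X ≤ D * (X + 1) ^ (-β) := by
  set r : ℝ := min p q with hr_def
  have hr : 1 < r := lt_min hp hq
  have hrpos : (0:ℝ) < r - 1 := by linarith
  set K : ℝ := ((β + c₁ + 1) / c₀) ^ (1 / (r - 1)) with hK_def
  set D : ℝ := max (A 0 + 1) (max 1 K) with hD_def
  have hD1 : (1:ℝ) ≤ D := le_trans (le_max_left 1 K) (le_max_right _ _)
  have hDpos : (0:ℝ) < D := lt_of_lt_of_le one_pos hD1
  have hDA0 : A 0 < D := lt_of_lt_of_le (by linarith) (le_max_left _ _)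
  have hx : (0:ℝ) < (β + c₁ + 1) / c₀ := by positivity
  have hDK : K ≤ D := le_trans (le_max_right 1 K) (le_max_right _ _)
  have hDr1 : (β + c₁ + 1) / c₀ ≤ D ^ (r - 1) := by
    have hKr : K ^ (r - 1) = (β + c₁ + 1) / c₀ := by
      rw [hK_def, ← Real.rpow_mul hx.le, one_div_mul_cancel (ne_of_gt hrpos),
        Real.rpow_one]
    rw [← hKr]
    exact Real.rpow_le_rpow (Real.rpow_nonneg hx.le _) hDK hrpos.le
  have hDrkey : β * D + c₁ + 1 ≤ c₀ * D ^ r := by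
    have hDr : D ^ r = D ^ (r - 1) * D := by
      rw [show r = (r - 1) + 1 by ring, Real.rpow_add hDpos, Real.rpow_one]
      ring_nf
    have h3 : (β + c₁ + 1) * D ≤ c₀ * D ^ r := by
      rw [hDr]
      have := mul_le_mul_of_nonneg_right hDr1 hDpos.le
      rw [div_mul_eq_mul_div, div_le_iff₀ hc₀] at this
      nlinarith
    nlinarith
  refine ⟨D, hDpos, ?_⟩
  by_contra hcon
  push_neg at hcon
  obtain ⟨X₁, hX₁, hAX₁⟩ := hcon
  set S : Set ℝ := Set.Ici (0:ℝ) ∩ (fun X => D * (X + 1) ^ (-β) - A X) ⁻¹' Set.Iic 0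
    with hS_def
  have hScl : IsClosed S := by
    apply ContinuousOn.preimage_isClosed_of_isClosed _ isClosed_Ici isClosed_Iic
    apply ContinuousOn.sub _ (hA.continuous.continuousOn)
    apply ContinuousOn.mul continuousOn_const
    intro X hX
    have hne : X + 1 ≠ 0 := by simp only [Set.mem_Ici] at hX; linarith
    exact ((continuousAt_id.add continuousAt_const).rpow_const
      (Or.inl hne)).continuousWithinAt
  have hSne : S.Nonempty := ⟨X₁, hX₁, by
    simp only [Set.mem_preimage, Set.mem_Iic]; linarith⟩
  have hSbdd : BddBelow S := ⟨0, fun x hx => hx.1⟩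
  set X₀ : ℝ := sInf S with hX₀_def
  have hX₀S : X₀ ∈ S := hScl.csInf_mem hSne hSbdd
  have hX₀0 : 0 ≤ X₀ := hX₀S.1
  have hgX₀ : D * (X₀ + 1) ^ (-β) ≤ A X₀ := by
    have h := hX₀S.2
    simp only [Set.mem_preimage, Set.mem_Iic] at h
    linarith
  have hX₀pos : 0 < X₀ := by
    rcases lt_or_eq_of_le hX₀0 with h | h
    · exact h
    · exfalso
      rw [← h] at hgX₀
      rw [zero_add, Real.one_rpow, mul_one] at hgX₀
      linarith
  -- before X₀, A is strictly below the barrier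
  have hbefore : ∀ y, 0 ≤ y → y < X₀ → A y < D * (y + 1) ^ (-β) := by
    intro y hy hyX
    by_contra hc
    push_neg at hc
    have hyS : y ∈ S := by
      refine Set.mem_inter hy ?_
      simp only [Set.mem_preimage, Set.mem_Iic]
      linarith
    exact absurd (csInf_le hSbdd hyS) (not_le.mpr hyX)
  set t : ℝ := X₀ + 1 with ht_def
  have htpos : (0:ℝ) < t := by linarith
  have ht1 : (1:ℝ) ≤ t := by linarith
  -- derivative bound at X₀
  have hBder : HasDerivAt (fun X : ℝ => D * (X + 1) ^ (-β))
      (D * (1 * (-β) * t ^ (-β - 1))) X₀ :=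
    (((hasDerivAt_id X₀).add_const 1).rpow_const
      (Or.inl (by simp only [id_eq]; linarith))).const_mul D
  have hAder : HasDerivAt A (deriv A X₀) X₀ :=
    ((hA.differentiable one_ne_zero) X₀).hasDerivAt
  have hgder : HasDerivAt (fun X => A X - D * (X + 1) ^ (-β))
      (deriv A X₀ - D * (1 * (-β) * t ^ (-β - 1))) X₀ := hAder.sub hBder
  have hslope : Filter.Tendsto (slope (fun X => A X - D * (X + 1) ^ (-β)) X₀)
      (nhdsWithin X₀ (Set.Iio X₀)) (nhds (deriv A X₀ - D * (1 * (-β) * t ^ (-β - 1)))) :=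
    (hasDerivAt_iff_tendsto_slope.mp hgder).mono_left
      (nhdsWithin_mono _ (fun y hy => ne_of_lt hy))
  have hdge : 0 ≤ deriv A X₀ - D * (1 * (-β) * t ^ (-β - 1)) := by
    refine ge_of_tendsto hslope ?_
    filter_upwards [Ioo_mem_nhdsLT_of_mem (Set.mem_Ioc.mpr ⟨hX₀pos, le_refl X₀⟩)]
      with y hy
    have hy0 : 0 ≤ y := hy.1.le
    have hyX : y < X₀ := hy.2
    have hnum : A y - D * (y + 1) ^ (-β) - (A X₀ - D * (X₀ + 1) ^ (-β)) ≤ 0 := by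
      have := hbefore y hy0 hyX
      linarith
    rw [slope_def_field, div_nonneg_iff]
    right
    constructor
    · linarith
    · linarith
  -- lower bound on the min term
  set m : ℝ := min b (β + 1) with hm_def
  have hmb : m ≤ b := min_le_left _ _
  have hmβ : m ≤ β + 1 := min_le_right _ _
  have hBpos : 0 ≤ D * t ^ (-β) := by positivity
  have hminlb : D ^ r * t ^ (-m) ≤ min (t ^ (-a) * A X₀ ^ p) (A X₀ ^ q) := by
    refine le_min ?_ ?_
    · have h₁ : (D * t ^ (-β)) ^ p ≤ A X₀ ^ p :=
        Real.rpow_le_rpow hBpos hgX₀ (by linarith)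
      have h₂ : (D * t ^ (-β)) ^ p = D ^ p * t ^ (-(β * p)) := by
        rw [Real.mul_rpow hDpos.le (Real.rpow_nonneg htpos.le _),
          ← Real.rpow_mul htpos.le, neg_mul]
      have h₃ : t ^ (-a) * (D ^ p * t ^ (-(β * p))) = D ^ p * t ^ (-(a + β * p)) := by
        rw [show (-(a + β * p)) = -a + -(β * p) by ring, Real.rpow_add htpos]
        ring
      have h₄ : D ^ r * t ^ (-m) ≤ D ^ p * t ^ (-(a + β * p)) :=
        mul_le_mul (Real.rpow_le_rpow_of_exponent_le hD1 (min_le_left p q))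
          (Real.rpow_le_rpow_of_exponent_le ht1 (by linarith))
          (Real.rpow_pos_of_pos htpos _).le (Real.rpow_nonneg hDpos.le _)
      calc D ^ r * t ^ (-m) ≤ D ^ p * t ^ (-(a + β * p)) := h₄
        _ = t ^ (-a) * (D ^ p * t ^ (-(β * p))) := h₃.symm
        _ = t ^ (-a) * (D * t ^ (-β)) ^ p := by rw [h₂]
        _ ≤ t ^ (-a) * A X₀ ^ p :=
            mul_le_mul_of_nonneg_left h₁ (Real.rpow_nonneg htpos.le _)
    · have h₁ : (D * t ^ (-β)) ^ q ≤ A X₀ ^ q :=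
        Real.rpow_le_rpow hBpos hgX₀ (by linarith)
      have h₂ : (D * t ^ (-β)) ^ q = D ^ q * t ^ (-(β * q)) := by
        rw [Real.mul_rpow hDpos.le (Real.rpow_nonneg htpos.le _),
          ← Real.rpow_mul htpos.le, neg_mul]
      have h₄ : D ^ r * t ^ (-m) ≤ D ^ q * t ^ (-(β * q)) :=
        mul_le_mul (Real.rpow_le_rpow_of_exponent_le hD1 (min_le_right p q))
          (Real.rpow_le_rpow_of_exponent_le ht1 (by linarith))
          (Real.rpow_pos_of_pos htpos _).le (Real.rpow_nonneg hDpos.le _)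
      calc D ^ r * t ^ (-m) ≤ D ^ q * t ^ (-(β * q)) := h₄
        _ = (D * t ^ (-β)) ^ q := h₂.symm
        _ ≤ A X₀ ^ q := h₁
  -- combine
  have hmd := hdiff X₀ hX₀0
  rw [← ht_def] at hmd
  have h5 : c₀ * (D ^ r * t ^ (-m)) ≤ c₀ * min (t ^ (-a) * A X₀ ^ p) (A X₀ ^ q) :=
    mul_le_mul_of_nonneg_left hminlb hc₀.le
  have ht_b : t ^ (-b) ≤ t ^ (-m) :=
    Real.rpow_le_rpow_of_exponent_le ht1 (by linarith)
  have ht_β : t ^ (-β - 1) ≤ t ^ (-m) :=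
    Real.rpow_le_rpow_of_exponent_le ht1 (by linarith)
  have htm : (0:ℝ) < t ^ (-m) := Real.rpow_pos_of_pos htpos _
  have h6 : c₁ * t ^ (-b) ≤ c₁ * t ^ (-m) := mul_le_mul_of_nonneg_left ht_b hc₁.le
  have h7 : D * β * t ^ (-β - 1) ≤ D * β * t ^ (-m) :=
    mul_le_mul_of_nonneg_left ht_β (by positivity)
  have h8 : c₀ * D ^ r * t ^ (-m) ≤ (c₁ + D * β) * t ^ (-m) := by nlinarith
  have h9 : c₀ * D ^ r ≤ c₁ + D * β := le_of_mul_le_mul_right h8 htm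
  nlinarith
end
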